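/- For every pair of finite numbers β1, β2 > 0, there exist Borel probability measures p and q on ℝ (which can be taken supported on two points) such that supp(p) = supp(q), hence D_△(p, q) = 0, but D_W^{β1,β2}(p, q) > 0. -/

import Mathlib

open MeasureTheory Metric Set
open scoped ENNReal

noncomputable section

/-- The topological support of a Borel measure: the smallest closed set of full measure,
realized as the intersection of all closed sets whose complement is null. -/
def msupport {X : Type*} [TopologicalSpace X] [MeasurableSpace X] (μ : Measure X) : Set X :=
  ⋂₀ {S : Set X | IsClosed S ∧ μ Sᶜ = 0}

/-- The symmetric support difference (SSD) divergence
`D_△(p, q) = ∫ d(x, supp q) dp + ∫ d(x, supp p) dq` (valued in `ℝ≥0∞`). -/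
def Dtri {X : Type*} [MeasurableSpace X] [PseudoMetricSpace X] (p q : Measure X) : ℝ≥0∞ :=
  (∫⁻ x, ENNReal.ofReal (infDist x (msupport q)) ∂p) +
  (∫⁻ x, ENNReal.ofReal (infDist x (msupport p)) ∂q)

/-- The Wasserstein-1 distance: infimum of `∫ d(x, y) dγ` over couplings of `p` and `q`. -/
def DW {X : Type*} [MeasurableSpace X] [PseudoMetricSpace X] (p q : Measure X) : ℝ≥0∞ :=
  ⨅ γ ∈ {γ : Measure (X × X) | γ.map Prod.fst = p ∧ γ.map Prod.snd = q},
    ∫⁻ z, ENNReal.ofReal (dist z.1 z.2) ∂γ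

/-- The β-admissible Wasserstein distance: infimum of `∫ d(x, y) dγ` over measures `γ`
whose first marginal is `p` and whose second marginal is `≤ (1 + β) • q`. -/
def DWbeta {X : Type*} [MeasurableSpace X] [PseudoMetricSpace X]
    (β : ℝ) (p q : Measure X) : ℝ≥0∞ :=
  ⨅ γ ∈ {γ : Measure (X × X) |
      γ.map Prod.fst = p ∧ γ.map Prod.snd ≤ (ENNReal.ofReal (1 + β)) • q},
    ∫⁻ z, ENNReal.ofReal (dist z.1 z.2) ∂γ

/-- The symmetrized (β₁, β₂)-admissible Wasserstein distance. -/
def DWsym {X : Type*} [MeasurableSpace X] [PseudoMetricSpace X]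
    (β₁ β₂ : ℝ) (p q : Measure X) : ℝ≥0∞ :=
  DWbeta β₁ p q + DWbeta β₂ q p

lemma msupport_two (μ : Measure ℝ) (h : μ (({0,1} : Set ℝ)ᶜ) = 0)
    (h0 : μ {0} ≠ 0) (h1 : μ {1} ≠ 0) : msupport μ = ({0,1} : Set ℝ) := by
  apply subset_antisymm
  · exact sInter_subset_of_mem ⟨(Set.toFinite ({0,1} : Set ℝ)).isClosed, h⟩
  · intro x hx
    rw [msupport, mem_sInter]
    rintro S ⟨-, hS⟩
    by_contra hxS
    have hsub : ({x} : Set ℝ) ⊆ Sᶜ := by simpa using hxS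
    have hle : μ {x} ≤ μ Sᶜ := measure_mono hsub
    rw [hS] at hle
    rcases hx with rfl | hx
    · exact h0 (le_antisymm hle (zero_le))
    · simp only [mem_singleton_iff] at hx; subst hx
      exact h1 (le_antisymm hle (zero_le))


/-- **Proposition 4, part 3b.** For any finite β₁, β₂ > 0 there are
probability measures on ℝ with equal supports (hence `D_△(p, q) = 0`) but
`D_W^{β₁,β₂}(p, q) > 0`. -/
theorem support_alignment_not_relaxed_alignment
    (β₁ β₂ : ℝ) (hβ₁ : 0 < β₁) (hβ₂ : 0 < β₂) :
    ∃ p q : Measure ℝ, IsProbabilityMeasure p ∧ IsProbabilityMeasure q ∧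
      msupport p = msupport q ∧ Dtri p q = 0 ∧ 0 < DWsym β₁ β₂ p q := by
  set t₀ : ℝ := 1 / (4 * (1 + β₁)) with ht₀def
  have hb : (0:ℝ) < 1 + β₁ := by linarith
  have ht₀pos : 0 < t₀ := by positivity
  have ht₀lt : t₀ < 1/4 := by
    rw [ht₀def]
    rw [div_lt_div_iff₀ (by positivity) (by norm_num)]
    nlinarith
  set p : Measure ℝ := (1/2 : ℝ≥0∞) • Measure.dirac 0 + (1/2 : ℝ≥0∞) • Measure.dirac 1 with hpdef
  set q : Measure ℝ := ENNReal.ofReal t₀ • Measure.dirac 0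
      + ENNReal.ofReal (1 - t₀) • Measure.dirac 1 with hqdef
  have hp0 : p {0} = 1/2 := by
    rw [hpdef]; simp [Measure.dirac_apply' _ (measurableSet_singleton _)]
  have hp1 : p {1} = 1/2 := by
    rw [hpdef]; simp [Measure.dirac_apply' _ (measurableSet_singleton _)]
  have hq0 : q {0} = ENNReal.ofReal t₀ := by
    rw [hqdef]; simp [Measure.dirac_apply' _ (measurableSet_singleton _)]
  have hq1 : q {1} = ENNReal.ofReal (1 - t₀) := by
    rw [hqdef]; simp [Measure.dirac_apply' _ (measurableSet_singleton _)]
  have hmc : MeasurableSet (({0,1} : Set ℝ)ᶜ) :=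
    ((Set.toFinite ({0,1} : Set ℝ)).isClosed.measurableSet).compl
  have hpc : p (({0,1} : Set ℝ)ᶜ) = 0 := by
    rw [hpdef]
    simp [Measure.dirac_apply' _ hmc]
  have hqc : q (({0,1} : Set ℝ)ᶜ) = 0 := by
    rw [hqdef]
    simp [Measure.dirac_apply' _ hmc]
  have hpprob : IsProbabilityMeasure p := by
    constructor
    rw [hpdef]
    simp
    rw [ENNReal.inv_two_add_inv_two]
  have hqprob : IsProbabilityMeasure q := by
    constructor
    rw [hqdef]
    simp only [Measure.add_apply, Measure.smul_apply, smul_eq_mul, measure_univ, mul_one]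
    rw [← ENNReal.ofReal_add ht₀pos.le (by linarith)]
    norm_num
  have hp0ne : p {0} ≠ 0 := by rw [hp0]; simp
  have hp1ne : p {1} ≠ 0 := by rw [hp1]; simp
  have hq0ne : q {0} ≠ 0 := by rw [hq0]; simp [ht₀pos]
  have hq1ne : q {1} ≠ 0 := by
    rw [hq1]; simp only [ne_eq, ENNReal.ofReal_eq_zero, not_le]; linarith
  have hsp : msupport p = ({0,1} : Set ℝ) := msupport_two p hpc hp0ne hp1ne
  have hsq : msupport q = ({0,1} : Set ℝ) := msupport_two q hqc hq0ne hq1ne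
  refine ⟨p, q, hpprob, hqprob, hsp.trans hsq.symm, ?_, ?_⟩
  · -- Dtri = 0
    have hzero : ∀ (μ : Measure ℝ), μ (({0,1} : Set ℝ)ᶜ) = 0 →
        ∫⁻ x, ENNReal.ofReal (infDist x ({0,1} : Set ℝ)) ∂μ = 0 := by
      intro μ hμ
      rw [lintegral_eq_zero_iff]
      · refine measure_mono_null ?_ hμ
        intro x hx
        simp only [mem_compl_iff]
        intro hmem
        apply hx
        simp only [Pi.zero_apply, ENNReal.ofReal_eq_zero]
        exact le_of_eq (infDist_zero_of_mem hmem)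
      · exact ENNReal.measurable_ofReal.comp (continuous_infDist_pt _).measurable
    rw [Dtri, hsp, hsq, hzero p hpc, hzero q hqc, add_zero]
  · -- 0 < DWsym
    have key : (1/4 : ℝ≥0∞) ≤ DWbeta β₁ p q := by
      apply le_iInf₂
      rintro γ ⟨hγ1, hγ2⟩
      -- the set A = {0} ×ˢ {1}
      set A : Set (ℝ × ℝ) := ({0} : Set ℝ) ×ˢ ({1} : Set ℝ) with hAdef
      have hAm : MeasurableSet A :=
        (measurableSet_singleton 0).prod (measurableSet_singleton 1)
      have hmap2 : ∀ s : Set ℝ, MeasurableSet s →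
          γ (Prod.snd ⁻¹' s) ≤ ENNReal.ofReal (1 + β₁) * q s := by
        intro s hs
        have := hγ2 s
        rwa [Measure.map_apply measurable_snd hs, Measure.smul_apply, smul_eq_mul] at this
      have h1 : γ (Prod.fst ⁻¹' ({0} : Set ℝ)) = 1/2 := by
        rw [← Measure.map_apply measurable_fst (measurableSet_singleton 0), hγ1, hp0]
      have h2 : γ (Prod.snd ⁻¹' ({0} : Set ℝ)) ≤ 1/4 := by
        refine le_trans (hmap2 _ (measurableSet_singleton 0)) ?_
        rw [hq0, ← ENNReal.ofReal_mul hb.le]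
        have : (1 + β₁) * t₀ = 1/4 := by
          rw [ht₀def]; field_simp
        rw [this]
        norm_num [ENNReal.ofReal_div_of_pos]
      have h3 : γ (Prod.snd ⁻¹' (({0,1} : Set ℝ)ᶜ)) = 0 := by
        refine le_antisymm (le_trans (hmap2 _ hmc) ?_) (zero_le)
        rw [hqc, mul_zero]
      have hcover : (Prod.fst ⁻¹' ({0} : Set ℝ)) ⊆
          A ∪ (Prod.snd ⁻¹' ({0} : Set ℝ)) ∪ (Prod.snd ⁻¹' (({0,1} : Set ℝ)ᶜ)) := by
        rintro ⟨x, y⟩ hx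
        simp only [mem_preimage, mem_singleton_iff] at hx
        by_cases hy1 : y = 1
        · left; left; exact ⟨by simpa using hx, by simpa using hy1⟩
        · by_cases hy0 : y = 0
          · left; right; simpa using hy0
          · right; simp [hy0, hy1]
      have hA : (1/4 : ℝ≥0∞) ≤ γ A := by
        have hle : γ (Prod.fst ⁻¹' ({0} : Set ℝ)) ≤ γ A + γ (Prod.snd ⁻¹' ({0} : Set ℝ))
            + γ (Prod.snd ⁻¹' (({0,1} : Set ℝ)ᶜ)) := by
          refine le_trans (measure_mono hcover) ?_
          refine le_trans (measure_union_le _ _) ?_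
          exact add_le_add (measure_union_le _ _) le_rfl
        rw [h1, h3, add_zero] at hle
        have : (1/2 : ℝ≥0∞) ≤ γ A + 1/4 := le_trans hle (add_le_add le_rfl h2)
        have h24 : (2⁻¹ : ℝ≥0∞) = 4⁻¹ + 4⁻¹ := by
          have h2 : ((4:ℝ≥0∞))⁻¹ + 4⁻¹ = 2 * 4⁻¹ := (two_mul _).symm
          rw [h2, show ((4:ℝ≥0∞)) = 2 * 2 by norm_num,
            ENNReal.mul_inv (by norm_num) (by norm_num),
            ← mul_assoc, ENNReal.mul_inv_cancel (by norm_num) (by norm_num), one_mul]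
        rw [show (1/2 : ℝ≥0∞) = 2⁻¹ by norm_num, h24,
          show (1/4 : ℝ≥0∞) = 4⁻¹ by norm_num] at this
        rw [show (1/4 : ℝ≥0∞) = 4⁻¹ by norm_num]
        exact (ENNReal.add_le_add_iff_right (by norm_num)).mp this
      calc (1/4 : ℝ≥0∞) ≤ γ A := hA
        _ = ∫⁻ _ in A, 1 ∂γ := by rw [setLIntegral_one]
        _ ≤ ∫⁻ z in A, ENNReal.ofReal (dist z.1 z.2) ∂γ := by
            refine setLIntegral_mono
              (ENNReal.measurable_ofReal.comp continuous_dist.measurable) ?_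
            rintro ⟨x, y⟩ ⟨hx, hy⟩
            simp only [mem_singleton_iff] at hx hy
            subst hx; subst hy
            simp [Real.dist_eq, abs_of_nonpos]
        _ ≤ ∫⁻ z, ENNReal.ofReal (dist z.1 z.2) ∂γ := setLIntegral_le_lintegral _ _
    have : (0:ℝ≥0∞) < DWbeta β₁ p q := lt_of_lt_of_le (by norm_num) key
    exact lt_of_lt_of_le this (le_add_right le_rfl)
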